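/- In the setting of the previous variation independence construction, the new covariate marginal q'(x) = q(x)·(1−γ')(1+exp(α'+βᵀx))/((1−γ)(1+exp(α+βᵀx))), with α' = α − log(γ/(1−γ)) + log(γ'/(1−γ')), sums to 1 over x∈X, where γ = Σ_x q(x)·exp(α+βᵀx)/(1+exp(α+βᵀx)). -/

import Mathlib

/-- the new covariate marginal
`q'(x) = q(x)·(1−γ')(1+exp(α'+βᵀx))/((1−γ)(1+exp(α+βᵀx)))`, with
`α' = α − log(γ/(1−γ)) + log(γ'/(1−γ'))` and
`γ = Σ_x q(x)·exp(α+βᵀx)/(1+exp(α+βᵀx))`, sums to 1 over `x ∈ X`. -/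
theorem new_marginal_sums_to_one {k : ℕ} (X : Finset (Fin k → ℝ))
    (q : (Fin k → ℝ) → ℝ) (α : ℝ) (β : Fin k → ℝ)
    (hq : ∀ x ∈ X, 0 < q x) (hqs : ∑ x ∈ X, q x = 1)
    (γ γ' α' : ℝ)
    (hγdef : γ = ∑ x ∈ X,
      q x * Real.exp (α + ∑ i, β i * x i) / (1 + Real.exp (α + ∑ i, β i * x i)))
    (hγ' : γ' ∈ Set.Ioo (0:ℝ) 1)
    (hα' : α' = α - Real.log (γ / (1 - γ)) + Real.log (γ' / (1 - γ')))
    (q' : (Fin k → ℝ) → ℝ)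
    (hq'def : ∀ x ∈ X, q' x =
      q x * ((1 - γ') * (1 + Real.exp (α' + ∑ i, β i * x i)))
        / ((1 - γ) * (1 + Real.exp (α + ∑ i, β i * x i)))) :
    ∑ x ∈ X, q' x = 1 := by

  obtain ⟨hγ'0, hγ'1⟩ := hγ'
  have hXne : X.Nonempty := by
    by_contra h
    rw [Finset.not_nonempty_iff_eq_empty] at h
    simp [h] at hqs
  set t : (Fin k → ℝ) → ℝ := fun x => Real.exp (α + ∑ i, β i * x i) with ht
  have hts : ∀ x, 0 < t x := fun x => Real.exp_pos _
  have h1t : ∀ x, 0 < 1 + t x := fun x => by have := hts x; linarith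
  have hγ0 : 0 < γ := by
    rw [hγdef]
    apply Finset.sum_pos
    · intro x hx
      exact div_pos (mul_pos (hq x hx) (hts x)) (h1t x)
    · exact hXne
  have hγ1 : γ < 1 := by
    rw [hγdef]
    refine lt_of_lt_of_eq ?_ hqs
    apply Finset.sum_lt_sum_of_nonempty hXne
    intro x hx
    have hqx := hq x hx
    rw [div_lt_iff₀ (h1t x)]
    nlinarith [hts x]
  have h1γ : 0 < 1 - γ := by linarith
  have h1γ' : 0 < 1 - γ' := by linarith
  have hsum2 : ∑ x ∈ X, q x * t x / (1 + t x) = γ := hγdef.symm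
  have hsum1 : ∑ x ∈ X, q x / (1 + t x) = 1 - γ := by
    have hc : ∀ x ∈ X, q x / (1 + t x) = q x - q x * t x / (1 + t x) := by
      intro x hx
      have := (h1t x).ne'
      field_simp
      ring
    rw [Finset.sum_congr rfl hc, Finset.sum_sub_distrib, hqs, hsum2]
  have hexp : ∀ x : Fin k → ℝ, Real.exp (α' + ∑ i, β i * x i) =
      t x * ((1 - γ) / γ) * (γ' / (1 - γ')) := by
    intro x
    rw [hα', show α - Real.log (γ / (1 - γ)) + Real.log (γ' / (1 - γ')) + ∑ i, β i * x i
        = (α + ∑ i, β i * x i) + Real.log (γ' / (1 - γ')) - Real.log (γ / (1 - γ)) by ring,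
      Real.exp_sub, Real.exp_add, Real.exp_log (by positivity), Real.exp_log (by positivity)]
    field_simp
    ring
  have hterm : ∀ x ∈ X, q' x =
      ((1 - γ') / (1 - γ)) * (q x / (1 + t x)) + (γ' / γ) * (q x * t x / (1 + t x)) := by
    intro x hx
    rw [hq'def x hx, hexp x]
    have h1 := (h1t x).ne'
    field_simp
    ring
  rw [Finset.sum_congr rfl hterm, Finset.sum_add_distrib, ← Finset.mul_sum, ← Finset.mul_sum,
    hsum1, hsum2]
  field_simp
  ring
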